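/- Let φ be a smooth function on [0,∞) with φ(0) = φ'(0) = 0, φ''(t) ≥ 0 and φ'''(t) ≥ 0 for all t ≥ 0. Then for all 0 ≤ p ≤ q, φ(q) − φ(p) − φ'(p)(q − p) ≥ φ(q − p). -/

import Mathlib

theorem stmt_2 (φ : ℝ → ℝ)
    (hφ : ContDiffOn ℝ 3 φ (Set.Ici 0))
    (h0 : φ 0 = 0) (h0' : derivWithin φ (Set.Ici 0) 0 = 0)
    (hφ'' : ∀ t : ℝ, 0 ≤ t →
      0 ≤ derivWithin (derivWithin φ (Set.Ici 0)) (Set.Ici 0) t)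
    (hφ''' : ∀ t : ℝ, 0 ≤ t →
      0 ≤ derivWithin (derivWithin (derivWithin φ (Set.Ici 0)) (Set.Ici 0))
            (Set.Ici 0) t)
    (p q : ℝ) (hp : 0 ≤ p) (hpq : p ≤ q) :
    φ q - φ p - derivWithin φ (Set.Ici 0) p * (q - p) ≥ φ (q - p) := by
  set f1 := derivWithin φ (Set.Ici (0:ℝ)) with hf1def
  set f2 := derivWithin f1 (Set.Ici (0:ℝ)) with hf2def
  have hs : UniqueDiffOn ℝ (Set.Ici (0:ℝ)) := uniqueDiffOn_Ici 0
  have hint : interior (Set.Ici (0:ℝ)) = Set.Ioi 0 := interior_Ici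
  have h1 : ContDiffOn ℝ 2 f1 (Set.Ici 0) := hφ.derivWithin hs (by norm_num)
  have h2 : ContDiffOn ℝ 1 f2 (Set.Ici 0) := h1.derivWithin hs (by norm_num)
  have hφdiff : DifferentiableOn ℝ φ (Set.Ici 0) :=
    hφ.differentiableOn (by norm_num)
  have h1diff : DifferentiableOn ℝ f1 (Set.Ici 0) :=
    h1.differentiableOn (by norm_num)
  have h2diff : DifferentiableOn ℝ f2 (Set.Ici 0) :=
    h2.differentiableOn (by norm_num)
  -- f2 is monotone on [0,∞)
  have hf2mono : MonotoneOn f2 (Set.Ici 0) := by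
    apply monotoneOn_of_hasDerivWithinAt_nonneg (convex_Ici 0) h2.continuousOn
      (f' := derivWithin f2 (Set.Ici 0))
    · intro x hx
      rw [hint] at hx ⊢
      exact ((h2diff x (le_of_lt (Set.mem_Ioi.mp hx))).hasDerivWithinAt).mono Set.Ioi_subset_Ici_self
    · intro x hx
      rw [hint] at hx
      exact hφ''' x (le_of_lt hx)
  -- auxiliary derivative facts for shifted functions
  have hmaps : Set.MapsTo (fun x : ℝ => p + x) (Set.Ici 0) (Set.Ici 0) := by
    intro x hx
    exact add_nonneg hp hx
  have hshift : ∀ x ∈ Set.Ici (0:ℝ),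
      HasDerivWithinAt (fun y : ℝ => φ (p + y)) (f1 (p + x)) (Set.Ici 0) x := by
    intro x hx
    have h := ((hφdiff (p + x) (hmaps hx)).hasDerivWithinAt).comp x
      ((hasDerivWithinAt_id x (Set.Ici 0)).const_add p) hmaps
    simp only [mul_one] at h; exact h
  have hshift1 : ∀ x ∈ Set.Ici (0:ℝ),
      HasDerivWithinAt (fun y : ℝ => f1 (p + y)) (f2 (p + x)) (Set.Ici 0) x := by
    intro x hx
    have h := ((h1diff (p + x) (hmaps hx)).hasDerivWithinAt).comp x
      ((hasDerivWithinAt_id x (Set.Ici 0)).const_add p) hmaps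
    simp only [mul_one] at h; exact h
  -- the function h x = f1 (p + x) - f1 x - f1 p
  set hh : ℝ → ℝ := fun x => f1 (p + x) - f1 x - f1 p with hhdef
  have hhderiv : ∀ x ∈ Set.Ici (0:ℝ),
      HasDerivWithinAt hh (f2 (p + x) - f2 x) (Set.Ici 0) x := by
    intro x hx
    exact ((hshift1 x hx).sub ((h1diff x hx).hasDerivWithinAt)).sub_const _
  have hhmono : MonotoneOn hh (Set.Ici 0) := by
    apply monotoneOn_of_hasDerivWithinAt_nonneg (convex_Ici 0)
      (f' := fun x => f2 (p + x) - f2 x)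
    · intro x hx
      exact (hhderiv x hx).continuousWithinAt
    · intro x hx
      rw [hint] at hx ⊢
      exact (hhderiv x (le_of_lt (Set.mem_Ioi.mp hx))).mono Set.Ioi_subset_Ici_self
    · intro x hx
      rw [hint] at hx
      have hx0 : (0:ℝ) ≤ x := le_of_lt hx
      have := hf2mono hx0 (hmaps hx0) (le_add_of_nonneg_left hp)
      linarith
  have hh0 : hh 0 = 0 := by simp [hhdef, h0']
  have hhnonneg : ∀ x ∈ Set.Ici (0:ℝ), 0 ≤ hh x := by
    intro x hx
    have := hhmono (le_refl (0:ℝ)) hx hx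
    rw [hh0] at this
    exact this
  -- the function g x = φ (p + x) - φ p - f1 p * x - φ x
  set g : ℝ → ℝ := fun x => φ (p + x) - φ p - f1 p * x - φ x with hgdef
  have hgderiv : ∀ x ∈ Set.Ici (0:ℝ), HasDerivWithinAt g (hh x) (Set.Ici 0) x := by
    intro x hx
    have h := (((hshift x hx).sub_const (φ p)).sub
        (((hasDerivWithinAt_id x (Set.Ici 0)).const_mul (f1 p)))).sub
        ((hφdiff x hx).hasDerivWithinAt)
    have : f1 (p + x) - f1 p * 1 - f1 x = hh x := by simp [hhdef]; ring
    rw [this] at h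
    exact h
  have hgmono : MonotoneOn g (Set.Ici 0) := by
    apply monotoneOn_of_hasDerivWithinAt_nonneg (convex_Ici 0) (f' := hh)
    · intro x hx
      exact (hgderiv x hx).continuousWithinAt
    · intro x hx
      rw [hint] at hx ⊢
      exact (hgderiv x (le_of_lt (Set.mem_Ioi.mp hx))).mono Set.Ioi_subset_Ici_self
    · intro x hx
      rw [hint] at hx
      exact hhnonneg x (le_of_lt (Set.mem_Ioi.mp hx))
  have hqp : (0:ℝ) ≤ q - p := sub_nonneg.mpr hpq
  have := hgmono (le_refl (0:ℝ)) hqp hqp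
  have hg0 : g 0 = 0 := by simp [hgdef, h0]
  rw [hg0] at this
  have hgq : g (q - p) = φ q - φ p - f1 p * (q - p) - φ (q - p) := by
    simp [hgdef]
  rw [hgq] at this
  linarith
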